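/- Let G be a walk-regular simple graph on n vertices with adjacency matrix A, and let P be an n×n real matrix satisfying the four Penrose equations APA = A, PAP = P, (AP)^T = AP, and (PA)^T = PA (i.e., P is the Moore-Penrose inverse of A). Then all diagonal entries of P are equal: P_{ii} = P_{jj} for all i, j. -/
import Mathlib


open Matrix Polynomial

section aux
variable {n : ℕ} {A : Matrix (Fin n) (Fin n) ℝ} (hA : A.IsHermitian)

noncomputable def Mf (hA : A.IsHermitian) (f : ℝ → ℝ) : Matrix (Fin n) (Fin n) ℝ :=
  (hA.eigenvectorUnitary : Matrix (Fin n) (Fin n) ℝ) * diagonal (f ∘ hA.eigenvalues) *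
    ((hA.eigenvectorUnitary : Matrix (Fin n) (Fin n) ℝ))ᵀ

lemma Ut_mul_U : ((hA.eigenvectorUnitary : Matrix (Fin n) (Fin n) ℝ))ᵀ *
    (hA.eigenvectorUnitary : Matrix (Fin n) (Fin n) ℝ) = 1 := by
  rw [← conjTranspose_eq_transpose_of_trivial, ← star_eq_conjTranspose]
  exact mem_unitaryGroup_iff'.mp hA.eigenvectorUnitary.2

lemma U_mul_Ut : (hA.eigenvectorUnitary : Matrix (Fin n) (Fin n) ℝ) *
    ((hA.eigenvectorUnitary : Matrix (Fin n) (Fin n) ℝ))ᵀ = 1 := by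
  rw [← conjTranspose_eq_transpose_of_trivial, ← star_eq_conjTranspose]
  exact mem_unitaryGroup_iff.mp hA.eigenvectorUnitary.2

lemma Mf_mul (f g : ℝ → ℝ) : Mf hA f * Mf hA g = Mf hA (fun x => f x * g x) := by
  unfold Mf
  rw [show ∀ (U D E Ut : Matrix (Fin n) (Fin n) ℝ), U * D * Ut * (U * E * Ut)
      = U * (D * (Ut * U) * E) * Ut by intros; simp only [mul_assoc], Ut_mul_U hA, mul_one,
    diagonal_mul_diagonal]
  rfl

lemma Mf_one : Mf hA (fun _ => 1) = 1 := by
  unfold Mf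
  have h1 : diagonal ((fun _ => (1:ℝ)) ∘ hA.eigenvalues) = 1 := by
    ext i j; by_cases h : i = j <;> simp [h, Matrix.one_apply]
  rw [h1, mul_one, U_mul_Ut hA]

lemma Mf_id : Mf hA (fun x => x) = A := by
  unfold Mf
  have h := hA.spectral_theorem
  simp only [RCLike.ofReal_real_eq_id, Function.id_comp] at h
  rw [← conjTranspose_eq_transpose_of_trivial, ← star_eq_conjTranspose]
  exact h.symm

lemma Mf_transpose (f : ℝ → ℝ) : (Mf hA f)ᵀ = Mf hA f := by
  unfold Mf
  rw [transpose_mul, transpose_mul, transpose_transpose, diagonal_transpose, mul_assoc]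

lemma Mf_pow (p : ℕ) : A ^ p = Mf hA (fun x => x ^ p) := by
  induction p with
  | zero => simpa using (Mf_one hA).symm
  | succ p ih =>
    have h := Mf_mul hA (fun x => x ^ p) (fun x => x)
    rw [Mf_id] at h
    rw [pow_succ, ih, h]
    simp only [← pow_succ]

lemma Mf_diag (f : ℝ → ℝ) (i : Fin n) :
    Mf hA f i i = ∑ k, f (hA.eigenvalues k) *
      ((hA.eigenvectorUnitary : Matrix (Fin n) (Fin n) ℝ) i k) ^ 2 := by
  unfold Mf
  rw [Matrix.mul_apply]
  refine Finset.sum_congr rfl fun k _ => ?_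
  rw [Matrix.mul_apply, Finset.sum_mul]
  rw [Finset.sum_eq_single k]
  · simp only [diagonal_apply_eq, transpose_apply, Function.comp_apply, sq]; ring
  · intro l _ hl; rw [Matrix.diagonal_apply_ne _ hl]; ring
  · simp

lemma mp_unique (P Q : Matrix (Fin n) (Fin n) ℝ)
    (h1 : A * P * A = A) (h2 : P * A * P = P) (h3 : (A * P)ᵀ = A * P) (h4 : (P * A)ᵀ = P * A)
    (g1 : A * Q * A = A) (g2 : Q * A * Q = Q) (g3 : (A * Q)ᵀ = A * Q) (g4 : (Q * A)ᵀ = Q * A) :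
    P = Q := by
  have hAP : A * P = A * Q := by
    calc A * P = (A * P)ᵀ := h3.symm
    _ = (A * Q * A * P)ᵀ := by rw [g1]
    _ = (A * P)ᵀ * (A * Q)ᵀ := by
        rw [← transpose_mul, show A * Q * (A * P) = A * Q * A * P by simp only [mul_assoc]]
    _ = A * P * (A * Q) := by rw [h3, g3]
    _ = A * Q := by rw [show A * P * (A * Q) = A * P * A * Q by simp only [mul_assoc], h1]
  have hPA : P * A = Q * A := by
    calc P * A = (P * A)ᵀ := h4.symm
    _ = (P * (A * Q * A))ᵀ := by rw [g1]
    _ = (Q * A)ᵀ * (P * A)ᵀ := by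
        rw [← transpose_mul, show P * A * (Q * A) = P * (A * Q * A) by simp only [mul_assoc]]
    _ = Q * A * (P * A) := by rw [h4, g4]
    _ = Q * A := by rw [show Q * A * (P * A) = Q * (A * P * A) by simp only [mul_assoc], h1]
  calc P = P * A * P := h2.symm
  _ = Q * A * P := by rw [hPA]
  _ = Q * (A * Q) := by rw [mul_assoc, hAP]
  _ = Q := by rw [← mul_assoc, g2]

end aux

noncomputable def ginv : ℝ → ℝ := fun x => if x = 0 then 0 else x⁻¹

/-- If `G` is a walk-regular simple graph with adjacency matrix `A`, and `P`
satisfies the four Penrose equations for `A` (i.e., `P` is the Moore–Penrose inverse of `A`),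
then all diagonal entries of `P` are equal. -/
theorem stmt_3 (n : ℕ) (G : SimpleGraph (Fin n)) [DecidableRel G.Adj]
    (hWR : ∀ p : ℕ, 0 < p →
      ∀ i j : Fin n, ((G.adjMatrix ℝ) ^ p) i i = ((G.adjMatrix ℝ) ^ p) j j)
    (P : Matrix (Fin n) (Fin n) ℝ)
    (h1 : G.adjMatrix ℝ * P * G.adjMatrix ℝ = G.adjMatrix ℝ)
    (h2 : P * G.adjMatrix ℝ * P = P)
    (h3 : (G.adjMatrix ℝ * P)ᵀ = G.adjMatrix ℝ * P)
    (h4 : (P * G.adjMatrix ℝ)ᵀ = P * G.adjMatrix ℝ) :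
    ∀ i j : Fin n, P i i = P j j := by
  set A := G.adjMatrix ℝ with hAdef
  have hA : A.IsHermitian := by
    rw [Matrix.IsHermitian, conjTranspose_eq_transpose_of_trivial, hAdef]
    exact SimpleGraph.transpose_adjMatrix G
  -- Penrose equations for Q := Mf hA ginv
  have hAQ : A * Mf hA ginv = Mf hA (fun x => x * ginv x) := by
    have h := Mf_mul hA (fun x => x) ginv; rwa [Mf_id] at h
  have hQA : Mf hA ginv * A = Mf hA (fun x => ginv x * x) := by
    have h := Mf_mul hA ginv (fun x => x); rwa [Mf_id] at h
  have g1 : A * Mf hA ginv * A = A := by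
    rw [hAQ]
    have h := Mf_mul hA (fun x => x * ginv x) (fun x => x); rw [Mf_id] at h
    have he : (fun x => x * ginv x * x) = fun x : ℝ => x := by
      funext x
      by_cases hx : x = 0
      · simp [ginv, hx]
      · simp only [ginv, if_neg hx]; field_simp
    rw [h, he, Mf_id]
  have g2 : Mf hA ginv * A * Mf hA ginv = Mf hA ginv := by
    have he : (fun x => ginv x * x * ginv x) = ginv := by
      funext x
      by_cases hx : x = 0
      · simp [ginv, hx]
      · simp only [ginv, if_neg hx]; field_simp
    rw [hQA, Mf_mul, he]
  have g3 : (A * Mf hA ginv)ᵀ = A * Mf hA ginv := by rw [hAQ, Mf_transpose]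
  have g4 : (Mf hA ginv * A)ᵀ = Mf hA ginv * A := by rw [hQA, Mf_transpose]
  have hPQ : P = Mf hA ginv := mp_unique P (Mf hA ginv) h1 h2 h3 h4 g1 g2 g3 g4
  -- moments are independent of the vertex
  have hmom : ∀ (p : ℕ) (i j : Fin n),
      Mf hA (fun x => x ^ p) i i = Mf hA (fun x => x ^ p) j j := by
    intro p i j
    rcases Nat.eq_zero_or_pos p with hp | hp
    · subst hp
      rw [show (fun x : ℝ => x ^ 0) = fun _ => 1 by funext x; simp, Mf_one,
        Matrix.one_apply_eq, Matrix.one_apply_eq]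
    · rw [← Mf_pow]; exact hWR p hp i j
  -- interpolation polynomial
  set s : Finset ℝ := Finset.image hA.eigenvalues Finset.univ with hs
  set q : Polynomial ℝ := Lagrange.interpolate s id ginv with hq
  have hnode : ∀ k, Polynomial.eval (hA.eigenvalues k) q = ginv (hA.eigenvalues k) := fun k =>
    Lagrange.eval_interpolate_at_node _ (Set.injOn_id _)
      (Finset.mem_image_of_mem _ (Finset.mem_univ k))
  have key : ∀ i : Fin n, Mf hA ginv i i =
      ∑ p ∈ Finset.range (q.natDegree + 1), q.coeff p * Mf hA (fun x => x ^ p) i i := by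
    intro i
    rw [Mf_diag]
    have hg : ∀ k, ginv (hA.eigenvalues k) =
        ∑ p ∈ Finset.range (q.natDegree + 1), q.coeff p * (hA.eigenvalues k) ^ p := by
      intro k
      rw [← hnode k, Polynomial.eval_eq_sum_range]
    calc ∑ k, ginv (hA.eigenvalues k) *
          ((hA.eigenvectorUnitary : Matrix (Fin n) (Fin n) ℝ) i k) ^ 2
        = ∑ k, ∑ p ∈ Finset.range (q.natDegree + 1), q.coeff p * (hA.eigenvalues k) ^ p *
            ((hA.eigenvectorUnitary : Matrix (Fin n) (Fin n) ℝ) i k) ^ 2 := by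
          refine Finset.sum_congr rfl fun k _ => ?_
          rw [hg k, Finset.sum_mul]
      _ = ∑ p ∈ Finset.range (q.natDegree + 1), q.coeff p * Mf hA (fun x => x ^ p) i i := by
          rw [Finset.sum_comm]
          refine Finset.sum_congr rfl fun p _ => ?_
          rw [Mf_diag, Finset.mul_sum]
          refine Finset.sum_congr rfl fun k _ => ?_
          ring
  intro i j
  rw [hPQ, key i, key j]
  exact Finset.sum_congr rfl fun p _ => by rw [hmom p i j]
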